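/- Let T be a spanning tree of a connected weighted graph Ĝ with positive edge weights x, let f be the maximum spanning tree weight of Ĝ and x_min the minimum edge weight in Ĝ. Let X = L̃^{-1} be the inverse reduced Laplacian of T with reference 0. Then X_{ij} ≤ f - x_min for all i ≠ j in {1,...,N}. -/

import Mathlib

set_option linter.unusedSectionVars false

namespace Stmt15Aux
open SimpleGraph Walk

variable {V : Type*} [DecidableEq V] {T : SimpleGraph V}

noncomputable def pw (hT : T.IsTree) (r v : V) : T.Walk r v :=
  ((SimpleGraph.isTree_iff_existsUnique_path.mp hT).2 r v).choose

lemma pw_isPath (hT : T.IsTree) (r v : V) : (pw hT r v).IsPath :=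
  ((SimpleGraph.isTree_iff_existsUnique_path.mp hT).2 r v).choose_spec.1

lemma pw_eq (hT : T.IsTree) {r v : V} (q : T.Walk r v) (hq : q.IsPath) :
    q = pw hT r v :=
  ((SimpleGraph.isTree_iff_existsUnique_path.mp hT).2 r v).choose_spec.2 q hq

lemma pw_self (hT : T.IsTree) (r : V) : pw hT r r = Walk.nil :=
  (pw_eq hT Walk.nil (Walk.IsPath.nil)).symm

lemma concat_path {u v r : V} {q : T.Walk r v} (hq : q.IsPath) (hu : u ∉ q.support)
    (h : T.Adj v u) : (q.concat h).IsPath := by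
  rw [← Walk.reverse_reverse (q.concat h)]
  apply Walk.IsPath.reverse
  rw [Walk.reverse_concat, Walk.cons_isPath_iff]
  exact ⟨hq.reverse, by simpa [Walk.support_reverse] using hu⟩

lemma step (hT : T.IsTree) (r : V) {u v : V} (h : T.Adj u v)
    (hv : v ∈ (pw hT r u).support) :
    (pw hT r u).edges = (pw hT r v).edges ++ [s(v, u)] := by
  have hp := pw_isPath hT r u
  have hq : ((pw hT r u).takeUntil v hv).IsPath := hp.takeUntil hv
  have hu : u ∉ ((pw hT r u).takeUntil v hv).support := by
    intro hmem
    have hspec := (pw hT r u).take_spec hv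
    have hnodup : (((pw hT r u).takeUntil v hv).support ++
        ((pw hT r u).dropUntil v hv).support.tail).Nodup := by
      rw [← Walk.support_append, hspec]; exact hp.support_nodup
    have hutail : u ∈ ((pw hT r u).dropUntil v hv).support.tail := by
      have hend : u ∈ ((pw hT r u).dropUntil v hv).support := Walk.end_mem_support _
      rw [Walk.support_eq_cons ((pw hT r u).dropUntil v hv)] at hend
      rcases List.mem_cons.mp hend with h1 | h1
      · exact absurd h1.symm h.ne'
      · exact h1
    exact (List.disjoint_of_nodup_append hnodup) hmem hutail
  have hq' : (((pw hT r u).takeUntil v hv).concat h.symm).IsPath := concat_path hq hu h.symm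
  have heq : ((pw hT r u).takeUntil v hv).concat h.symm = pw hT r u := pw_eq hT _ hq'
  have heq2 : (pw hT r u).takeUntil v hv = pw hT r v := pw_eq hT _ hq
  rw [← heq, Walk.edges_concat, heq2, List.concat_eq_append]

lemma mem_or (hT : T.IsTree) (r : V) {u v : V} (h : T.Adj u v) :
    s(u, v) ∈ (pw hT r u).edges ∨ s(u, v) ∈ (pw hT r v).edges := by
  by_cases hv : v ∈ (pw hT r u).support
  · left; rw [step hT r h hv]; simp [Sym2.eq_swap]
  · right
    have hpath : ((pw hT r u).concat h).IsPath := concat_path (pw_isPath hT r u) hv h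
    rw [← pw_eq hT _ hpath, Walk.edges_concat]
    simp

lemma first_edge_eq {w t : V} {p : T.Walk w t} (hp : p.IsPath) {v v' : V}
    (h : s(w, v) ∈ p.edges) (h' : s(w, v') ∈ p.edges) : v = v' := by
  cases p with
  | nil => simp at h
  | @cons _ b _ hadj p' =>
    rw [Walk.cons_isPath_iff] at hp
    have key : ∀ z : V, s(w, z) ∈ (Walk.cons hadj p').edges → z = b := by
      intro z hz
      rw [Walk.edges_cons, List.mem_cons] at hz
      rcases hz with hz | hz
      · exact (Sym2.congr_right).mp hz
      · exact absurd (Walk.fst_mem_support_of_mem_edges p' hz) hp.2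
    rw [key v h, key v' h']

lemma last_edge_eq {r w : V} {p : T.Walk r w} (hp : p.IsPath) {v v' : V}
    (h : s(w, v) ∈ p.edges) (h' : s(w, v') ∈ p.edges) : v = v' :=
  first_edge_eq hp.reverse (by rwa [Walk.edges_reverse, List.mem_reverse])
    (by rwa [Walk.edges_reverse, List.mem_reverse])

end Stmt15Aux
namespace Stmt15Aux2
open SimpleGraph Walk Stmt15Aux

variable {V : Type*} [Fintype V] [DecidableEq V] {T : SimpleGraph V}

lemma count_sum (hT : T.IsTree) (r t w : V) (hw : w ≠ r) :
    ∑ v : V, (if s(w, v) ∈ (pw hT r t).edges then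
        (if s(w, v) ∈ (pw hT r w).edges then (1 : ℝ) else -1) else 0)
      = if w = t then 1 else 0 := by
  classical
  by_cases hsupp : w ∈ (pw hT r t).support
  · by_cases hwt : w = t
    · subst hwt
      obtain ⟨a, hadj, p', hrev⟩ := Walk.exists_eq_cons_of_ne hw (pw hT r w).reverse
      have ha : s(w, a) ∈ (pw hT r w).edges := by
        rw [← List.mem_reverse, ← Walk.edges_reverse, hrev, Walk.edges_cons]
        exact List.mem_cons_self
      have hpt : ∀ v : V, (if s(w, v) ∈ (pw hT r w).edges then
          (if s(w, v) ∈ (pw hT r w).edges then (1 : ℝ) else -1) else 0)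
          = if v = a then 1 else 0 := by
        intro v
        by_cases hv : s(w, v) ∈ (pw hT r w).edges
        · rw [if_pos hv, if_pos hv, if_pos (last_edge_eq (pw_isPath hT r w) hv ha)]
        · rw [if_neg hv, if_neg (fun hva : v = a => hv (by rw [hva]; exact ha))]
      rw [if_pos rfl]
      simp only [hpt]
      simp
    · -- interior case
      set q := (pw hT r t).takeUntil w hsupp with hqdef
      set d := (pw hT r t).dropUntil w hsupp with hddef
      have hp := pw_isPath hT r t
      have hq : q.IsPath := hp.takeUntil hsupp
      have hd : d.IsPath := hp.dropUntil hsupp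
      have hspec : q.append d = pw hT r t := (pw hT r t).take_spec hsupp
      have hedges : (pw hT r t).edges = q.edges ++ d.edges := by
        rw [← hspec, Walk.edges_append]
      have hnodup : (q.edges ++ d.edges).Nodup := by
        rw [← Walk.edges_append, hspec]; exact hp.edges_nodup
      have hdisj : q.edges.Disjoint d.edges := List.disjoint_of_nodup_append hnodup
      obtain ⟨a, hadja, q'', hreva⟩ := Walk.exists_eq_cons_of_ne hw q.reverse
      have ha : s(w, a) ∈ q.edges := by
        rw [← List.mem_reverse, ← Walk.edges_reverse, hreva, Walk.edges_cons]
        exact List.mem_cons_self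
      obtain ⟨b, hadjb, d', hrevb⟩ := Walk.exists_eq_cons_of_ne hwt d
      have hb : s(w, b) ∈ d.edges := by
        rw [hrevb, Walk.edges_cons]; exact List.mem_cons_self
      have hqpw : q = pw hT r w := pw_eq hT q hq
      have hab : a ≠ b := by
        intro hcontra
        exact hdisj ha (by rw [hcontra]; exact hb)
      have hpt : ∀ v : V, (if s(w, v) ∈ (pw hT r t).edges then
          (if s(w, v) ∈ (pw hT r w).edges then (1 : ℝ) else -1) else 0)
          = (if v = a then 1 else 0) + (if v = b then -1 else 0) := by
        intro v
        by_cases hva : v = a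
        · subst hva
          have h1 : s(w, v) ∈ (pw hT r t).edges := hedges ▸ List.mem_append_left _ ha
          have h2 : s(w, v) ∈ (pw hT r w).edges := hqpw ▸ ha
          rw [if_pos h1, if_pos h2, if_pos rfl, if_neg hab]
          norm_num
        · by_cases hvb : v = b
          · subst hvb
            have h1 : s(w, v) ∈ (pw hT r t).edges := hedges ▸ List.mem_append_right _ hb
            have h2 : s(w, v) ∉ (pw hT r w).edges := by
              rw [← hqpw]; exact fun hmem => hdisj hmem hb
            rw [if_pos h1, if_neg h2, if_neg hva, if_pos rfl]
            norm_num
          · rw [if_neg hva, if_neg hvb]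
            have h1 : s(w, v) ∉ (pw hT r t).edges := by
              rw [hedges]
              intro hmem
              rcases List.mem_append.mp hmem with hm | hm
              · exact hva (last_edge_eq hq hm ha)
              · exact hvb (first_edge_eq hd hm hb)
            rw [if_neg h1]
            norm_num
      rw [if_neg hwt]
      simp only [hpt]
      rw [Finset.sum_add_distrib]
      simp
  · have hall : ∀ v : V, (if s(w, v) ∈ (pw hT r t).edges then
        (if s(w, v) ∈ (pw hT r w).edges then (1 : ℝ) else -1) else 0) = 0 := by
      intro v
      rw [if_neg]
      intro hmem
      exact hsupp (Walk.fst_mem_support_of_mem_edges _ hmem)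
    have hwt : w ≠ t := fun h => hsupp (h ▸ Walk.end_mem_support _)
    rw [if_neg hwt]
    simp [hall]

end Stmt15Aux2




open Matrix

/-- The reduced susceptance Laplacian of a weighted graph on `Fin (N+1)` with
node `0` taken as the reference node (its row and column removed), where
`b e` is the susceptance of edge `e`. -/
noncomputable def reducedLap (N : ℕ) (G : SimpleGraph (Fin (N + 1)))
    [DecidableRel G.Adj] (b : Sym2 (Fin (N + 1)) → ℝ) :
    Matrix (Fin N) (Fin N) ℝ := fun i j =>
  if i = j then ∑ k : Fin (N + 1), if G.Adj i.succ k then b s(i.succ, k) else 0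
  else if G.Adj i.succ j.succ then -b s(i.succ, j.succ) else 0

theorem stmt15 (N : ℕ) (G T : SimpleGraph (Fin (N + 1))) [DecidableRel T.Adj]
    (hG : G.Connected) (hTG : T ≤ G) (hT : T.IsTree)
    (x : Sym2 (Fin (N + 1)) → ℝ) (hx : ∀ e ∈ G.edgeSet, 0 < x e)
    (f xmin : ℝ)
    (hf : IsGreatest {w : ℝ | ∃ T' : SimpleGraph (Fin (N + 1)),
      T' ≤ G ∧ T'.IsTree ∧ w = ∑ e ∈ T'.edgeSet.toFinite.toFinset, x e} f)
    (hxmin : IsLeast {w : ℝ | ∃ e ∈ G.edgeSet, w = x e} xmin)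
    (i j : Fin N) (hij : i ≠ j) :
    (reducedLap N T (fun e => (x e)⁻¹))⁻¹ i j ≤ f - xmin := by
  classical
  have hTsub : T.edgeSet ⊆ G.edgeSet := SimpleGraph.edgeSet_subset_edgeSet.mpr hTG
  set P : Fin (N + 1) → List (Sym2 (Fin (N + 1))) :=
    fun v => (Stmt15Aux.pw hT 0 v).edges with hPdef
  set φ : Fin (N + 1) → Fin (N + 1) → ℝ :=
    fun t v => ∑ e ∈ (P v).toFinset ∩ (P t).toFinset, x e with hφdef
  set B : Matrix (Fin N) (Fin N) ℝ := Matrix.of fun i' j' => φ i'.succ j'.succ with hBdef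
  -- positivity on tree edges
  have hxT : ∀ {e}, e ∈ T.edgeSet → 0 < x e := fun he => hx _ (hTsub he)
  -- φ at the root vanishes
  have hφ0 : ∀ t, φ t 0 = 0 := by
    intro t
    have h0 : P 0 = [] := by
      show (Stmt15Aux.pw hT 0 0).edges = []
      rw [Stmt15Aux.pw_self hT 0]
      rfl
    simp [hφdef, h0]
  -- the step relation
  have hstep : ∀ t u v, T.Adj u v → s(u, v) ∈ P u →
      φ t u = φ t v + (if s(u, v) ∈ (P t).toFinset then x s(u, v) else 0) := by
    intro t u v h hin
    have hv : v ∈ (Stmt15Aux.pw hT 0 u).support :=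
      SimpleGraph.Walk.snd_mem_support_of_mem_edges _ hin
    have he : P u = P v ++ [s(v, u)] := Stmt15Aux.step hT 0 h hv
    have hnodup : (P v ++ [s(v, u)]).Nodup := by
      rw [← he]; exact (Stmt15Aux.pw_isPath hT 0 u).edges_nodup
    have hnot : s(v, u) ∉ (P v).toFinset := by
      rw [List.mem_toFinset]
      intro hmem
      exact (List.disjoint_of_nodup_append hnodup) hmem (List.mem_singleton_self _)
    have hswap : s(v, u) = s(u, v) := Sym2.eq_swap
    show ∑ e ∈ (P u).toFinset ∩ (P t).toFinset, x e = _
    rw [he, List.toFinset_append, Finset.union_inter_distrib_right, Finset.sum_union]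
    · congr 1
      have hsingle : ([s(v, u)].toFinset : Finset (Sym2 (Fin (N + 1)))) = {s(v, u)} := by
        simp
      rw [hsingle]
      by_cases hm : s(u, v) ∈ (P t).toFinset
      · rw [if_pos hm, Finset.singleton_inter_of_mem (by rwa [hswap]), Finset.sum_singleton,
          hswap]
      · rw [if_neg hm, Finset.singleton_inter_of_notMem (by rwa [hswap]), Finset.sum_empty]
    · refine Finset.disjoint_left.mpr ?_
      intro e he1 he2
      have h1 : e ∈ (P v).toFinset := (Finset.mem_inter.mp he1).1
      have h2 : e ∈ ({s(v, u)} : Finset _) := by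
        have h3 := (Finset.mem_inter.mp he2).1
        simpa using h3
      rw [Finset.mem_singleton] at h2
      exact hnot (h2 ▸ h1)
  -- B is a left inverse of the reduced Laplacian
  have hBL : B * reducedLap N T (fun e => (x e)⁻¹) = 1 := by
    ext i' k
    rw [Matrix.mul_apply, Matrix.one_apply]
    set w : Fin (N + 1) := k.succ with hwdef
    set t : Fin (N + 1) := i'.succ with htdef
    have hw0 : w ≠ 0 := Fin.succ_ne_zero k
    set D : ℝ := ∑ v : Fin (N + 1), (if T.Adj w v then (x s(w, v))⁻¹ else 0) with hDdef
    have hL : ∀ j' : Fin N, reducedLap N T (fun e => (x e)⁻¹) j' k =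
        (if j' = k then D else 0)
        + (if T.Adj w j'.succ then -(x s(w, j'.succ))⁻¹ else 0) := by
      intro j'
      show (if j' = k then ∑ v : Fin (N + 1),
          (if T.Adj j'.succ v then (x s(j'.succ, v))⁻¹ else 0)
        else if T.Adj j'.succ k.succ then -(x s(j'.succ, k.succ))⁻¹ else 0) = _
      by_cases hj : j' = k
      · subst hj
        rw [if_pos rfl, if_pos rfl, if_neg (T.irrefl), add_zero]
      · rw [if_neg hj, if_neg hj, zero_add]
        by_cases hadj : T.Adj j'.succ w
        · rw [if_pos hadj, if_pos hadj.symm, Sym2.eq_swap]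
        · rw [if_neg hadj, if_neg (fun hh => hadj hh.symm)]
    have hsum1 : ∑ j', B i' j' * reducedLap N T (fun e => (x e)⁻¹) j' k =
        φ t w * D + ∑ j' : Fin N,
          (if T.Adj w j'.succ then -(φ t j'.succ * (x s(w, j'.succ))⁻¹) else 0) := by
      simp only [hL, mul_add, Finset.sum_add_distrib]
      congr 1
      · rw [Finset.sum_congr rfl (fun j' _ => by rw [mul_ite, mul_zero]),
          Finset.sum_ite_eq' Finset.univ k]
        simp [hBdef]
        exact Or.inl rfl
      · refine Finset.sum_congr rfl fun j' _ => ?_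
        by_cases hadj : T.Adj w j'.succ
        · rw [if_pos hadj, if_pos hadj, mul_neg]
          ring_nf
          simp [hBdef]
          ring
        · rw [if_neg hadj, if_neg hadj, mul_zero]
    have hsum2 : φ t w * D + ∑ j' : Fin N,
          (if T.Adj w j'.succ then -(φ t j'.succ * (x s(w, j'.succ))⁻¹) else 0)
        = ∑ v : Fin (N + 1),
          (if T.Adj w v then (φ t w - φ t v) * (x s(w, v))⁻¹ else 0) := by
      have hexp : ∀ v : Fin (N + 1),
          (if T.Adj w v then (φ t w - φ t v) * (x s(w, v))⁻¹ else 0)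
          = (if T.Adj w v then φ t w * (x s(w, v))⁻¹ else 0)
            + (if T.Adj w v then -(φ t v * (x s(w, v))⁻¹) else 0) := by
        intro v
        by_cases hadj : T.Adj w v
        · rw [if_pos hadj, if_pos hadj, if_pos hadj]; ring
        · rw [if_neg hadj, if_neg hadj, if_neg hadj]; ring
      rw [Finset.sum_congr rfl (fun v _ => hexp v), Finset.sum_add_distrib]
      congr 1
      · rw [hDdef, Finset.mul_sum]
        refine Finset.sum_congr rfl fun v _ => ?_
        rw [mul_ite, mul_zero]
      · rw [Fin.sum_univ_succ]
        have h0 : (if T.Adj w 0 then -(φ t 0 * (x s(w, 0))⁻¹) else 0) = 0 := by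
          rw [hφ0]
          simp
        rw [h0, zero_add]
    rw [hsum1, hsum2]
    have hptwise : ∀ v : Fin (N + 1),
        (if T.Adj w v then (φ t w - φ t v) * (x s(w, v))⁻¹ else 0)
        = (if s(w, v) ∈ (Stmt15Aux.pw hT 0 t).edges then
            (if s(w, v) ∈ (Stmt15Aux.pw hT 0 w).edges then (1 : ℝ) else -1) else 0) := by
      intro v
      by_cases hadj : T.Adj w v
      · have hxe : x s(w, v) ≠ 0 := ne_of_gt (hxT (T.mem_edgeSet.mpr hadj))
        by_cases hew : s(w, v) ∈ P w
        · have hdiff : φ t w - φ t v = (if s(w, v) ∈ (P t).toFinset then x s(w, v) else 0) := by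
            rw [hstep t w v hadj hew]; ring
          rw [if_pos hadj, hdiff, if_pos hew]
          by_cases hm : s(w, v) ∈ P t
          · rw [if_pos (List.mem_toFinset.mpr hm), if_pos hm, mul_inv_cancel₀ hxe]
          · rw [if_neg (fun hh => hm (List.mem_toFinset.mp hh)), if_neg hm, zero_mul]
        · have hev : s(v, w) ∈ P v := by
            rcases Stmt15Aux.mem_or hT 0 hadj with hc | hc
            · exact absurd hc hew
            · rwa [Sym2.eq_swap]
          have hdiff : φ t w - φ t v = -(if s(v, w) ∈ (P t).toFinset then x s(v, w) else 0) := by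
            rw [hstep t v w hadj.symm hev]; ring
          rw [if_pos hadj, hdiff, if_neg hew]
          rw [Sym2.eq_swap (a := w)]
          by_cases hm : s(v, w) ∈ P t
          · rw [if_pos (List.mem_toFinset.mpr hm), if_pos hm, neg_mul, mul_inv_cancel₀]
            rwa [Sym2.eq_swap]
          · rw [if_neg (fun hh => hm (List.mem_toFinset.mp hh)), if_neg hm, neg_zero, zero_mul]
      · rw [if_neg hadj, if_neg]
        intro hmem
        exact hadj ((Stmt15Aux.pw hT 0 t).adj_of_mem_edges hmem)
    rw [Finset.sum_congr rfl (fun v _ => hptwise v), Stmt15Aux2.count_sum hT 0 t w hw0]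
    by_cases hik : i' = k
    · rw [if_pos (show w = t by rw [hwdef, htdef, hik]), if_pos hik]
    · rw [if_neg (fun hh : w = t => hik (Fin.succ_injective N (by rw [← hwdef, ← htdef, hh])).symm),
        if_neg hik]
  have hinv : (reducedLap N T (fun e => (x e)⁻¹))⁻¹ = B := Matrix.inv_eq_left_inv hBL
  rw [hinv]
  -- Now bound B i j
  show φ i.succ j.succ ≤ f - xmin
  -- find an omitted edge
  obtain ⟨a, hadja, p1, hrev1⟩ :=
    SimpleGraph.Walk.exists_eq_cons_of_ne (Fin.succ_ne_zero i) (Stmt15Aux.pw hT 0 i.succ).reverse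
  have he1 : s(i.succ, a) ∈ P i.succ := by
    rw [hPdef]
    rw [← List.mem_reverse, ← SimpleGraph.Walk.edges_reverse, hrev1, SimpleGraph.Walk.edges_cons]
    exact List.mem_cons_self
  obtain ⟨b, hadjb, p2, hrev2⟩ :=
    SimpleGraph.Walk.exists_eq_cons_of_ne (Fin.succ_ne_zero j) (Stmt15Aux.pw hT 0 j.succ).reverse
  have he2 : s(j.succ, b) ∈ P j.succ := by
    rw [hPdef]
    rw [← List.mem_reverse, ← SimpleGraph.Walk.edges_reverse, hrev2, SimpleGraph.Walk.edges_cons]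
    exact List.mem_cons_self
  have hmain : ∃ e0, e0 ∈ T.edgeSet ∧ e0 ∉ (P j.succ).toFinset ∩ (P i.succ).toFinset := by
    by_cases hc : s(i.succ, a) ∈ P j.succ
    · refine ⟨s(j.succ, b), (Stmt15Aux.pw hT 0 j.succ).edges_subset_edgeSet he2, ?_⟩
      intro hmem
      have hc2 : s(j.succ, b) ∈ P i.succ :=
        List.mem_toFinset.mp (Finset.mem_inter.mp hmem).2
      -- derive i.succ = j.succ
      have hisupp : i.succ ∈ (Stmt15Aux.pw hT 0 j.succ).support :=
        SimpleGraph.Walk.fst_mem_support_of_mem_edges _ hc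
      have hjsupp : j.succ ∈ (Stmt15Aux.pw hT 0 i.succ).support :=
        SimpleGraph.Walk.fst_mem_support_of_mem_edges _ hc2
      have hlen1 : (Stmt15Aux.pw hT 0 i.succ).length ≤ (Stmt15Aux.pw hT 0 j.succ).length := by
        have := Stmt15Aux.pw_eq hT ((Stmt15Aux.pw hT 0 j.succ).takeUntil i.succ hisupp)
          ((Stmt15Aux.pw_isPath hT 0 j.succ).takeUntil hisupp)
        rw [← this]
        exact SimpleGraph.Walk.length_takeUntil_le _ hisupp
      have hlen2 : (Stmt15Aux.pw hT 0 j.succ).length ≤ (Stmt15Aux.pw hT 0 i.succ).length := by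
        have := Stmt15Aux.pw_eq hT ((Stmt15Aux.pw hT 0 i.succ).takeUntil j.succ hjsupp)
          ((Stmt15Aux.pw_isPath hT 0 i.succ).takeUntil hjsupp)
        rw [← this]
        exact SimpleGraph.Walk.length_takeUntil_le _ hjsupp
      have heqpath : (Stmt15Aux.pw hT 0 j.succ).takeUntil i.succ hisupp
          = Stmt15Aux.pw hT 0 i.succ :=
        (Stmt15Aux.pw_eq hT _ ((Stmt15Aux.pw_isPath hT 0 j.succ).takeUntil hisupp))
      have hdrop0 : ((Stmt15Aux.pw hT 0 j.succ).dropUntil i.succ hisupp).length = 0 := by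
        have hspec := (Stmt15Aux.pw hT 0 j.succ).take_spec hisupp
        have := congrArg SimpleGraph.Walk.length hspec
        rw [SimpleGraph.Walk.length_append, heqpath] at this
        omega
      have : i.succ = j.succ := SimpleGraph.Walk.eq_of_length_eq_zero hdrop0
      exact hij (Fin.succ_injective N this)
    · refine ⟨s(i.succ, a), (Stmt15Aux.pw hT 0 i.succ).edges_subset_edgeSet he1, ?_⟩
      intro hmem
      exact hc (List.mem_toFinset.mp (Finset.mem_inter.mp hmem).1)
  obtain ⟨e0, he0T, he0S⟩ := hmain
  have he0G : e0 ∈ G.edgeSet := hTsub he0T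
  set ET : Finset (Sym2 (Fin (N + 1))) := T.edgeSet.toFinite.toFinset with hETdef
  have he0ET : e0 ∈ ET := by rw [hETdef, Set.Finite.mem_toFinset]; exact he0T
  have hsubset : (P j.succ).toFinset ∩ (P i.succ).toFinset ⊆ ET.erase e0 := by
    intro e hmem
    rw [Finset.mem_erase]
    constructor
    · intro hee; exact he0S (hee ▸ hmem)
    · rw [hETdef, Set.Finite.mem_toFinset]
      exact (Stmt15Aux.pw hT 0 j.succ).edges_subset_edgeSet
        (List.mem_toFinset.mp (Finset.mem_inter.mp hmem).1)
  have hstep1 : φ i.succ j.succ ≤ ∑ e ∈ ET.erase e0, x e := by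
    refine Finset.sum_le_sum_of_subset_of_nonneg hsubset ?_
    intro e hmem _
    have : e ∈ T.edgeSet := by
      have := Finset.mem_of_mem_erase hmem
      rwa [hETdef, Set.Finite.mem_toFinset] at this
    exact le_of_lt (hxT this)
  have hstep2 : ∑ e ∈ ET.erase e0, x e = (∑ e ∈ ET, x e) - x e0 :=
    Finset.sum_erase_eq_sub he0ET
  have hstep3 : (∑ e ∈ ET, x e) ≤ f := hf.2 ⟨T, hTG, hT, rfl⟩
  have hstep4 : xmin ≤ x e0 := hxmin.2 ⟨e0, he0G, rfl⟩
  calc φ i.succ j.succ ≤ (∑ e ∈ ET, x e) - x e0 := by rw [← hstep2]; exact hstep1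
    _ ≤ f - xmin := by linarith
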